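/- Let A_0, A_1, ..., A_M be exchangeable real-valued random variables. Define pval = (1/(M+1)) * (1 + #{m in {1,...,M} : A_m >= A_0}). Then for every alpha in [0,1], P(pval <= alpha) <= alpha. -/

import Mathlib

open MeasureTheory
open scoped ENNReal

set_option maxRecDepth 8000

/-- Validity of the exchangeability-based p-value: if `A 0, ..., A M` are exchangeable
real random variables and `pval = (1 + #{m ≥ 1 : A m ≥ A 0})/(M+1)`, then
`P(pval ≤ α) ≤ α` for all `α ∈ [0,1]`. -/
theorem pval_valid_of_exchangeable
    {Ω : Type*} [MeasurableSpace Ω] (P : Measure Ω) [IsProbabilityMeasure P]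
    (M : ℕ) (A : Fin (M + 1) → Ω → ℝ) (hA : ∀ i, Measurable (A i))
    (hexch : ∀ σ : Equiv.Perm (Fin (M + 1)),
      Measure.map (fun ω => fun i => A (σ i) ω) P = Measure.map (fun ω => fun i => A i ω) P)
    (α : ℝ) (hα0 : 0 ≤ α) (hα1 : α ≤ 1) :
    (P {ω | ((1 + (Finset.filter (fun m : Fin M => A 0 ω ≤ A m.succ ω) Finset.univ).card : ℕ) : ℝ)
        / (M + 1) ≤ α}).toReal ≤ α := by
  set k : ℕ := ⌊α * (M + 1)⌋₊ with hk
  set N : Fin (M + 1) → Ω → ℕ :=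
    fun i ω => (Finset.univ.filter (fun m : Fin (M + 1) => A i ω ≤ A m ω)).card with hNdef
  have hNsum : ∀ i ω, N i ω = ∑ m : Fin (M + 1), if A i ω ≤ A m ω then 1 else 0 := by
    intro i ω; exact Finset.card_filter _ _
  have hNmeas : ∀ i, Measurable (N i) := by
    intro i
    have : N i = fun ω => ∑ m : Fin (M + 1), if A i ω ≤ A m ω then 1 else 0 := by
      funext ω; exact hNsum i ω
    rw [this]
    exact Finset.measurable_sum _ fun m _ =>
      Measurable.ite (measurableSet_le (hA i) (hA m)) measurable_const measurable_const
  set E : Fin (M + 1) → Set Ω := fun i => {ω | N i ω ≤ k} with hEdef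
  have hEmeas : ∀ i, MeasurableSet (E i) := by
    intro i
    exact (hNmeas i) (measurableSet_Iic : MeasurableSet (Set.Iic k))
  -- identify the target event with E 0
  have hevent : {ω | ((1 + (Finset.filter (fun m : Fin M => A 0 ω ≤ A m.succ ω) Finset.univ).card : ℕ) : ℝ)
        / (M + 1) ≤ α} = E 0 := by
    ext ω
    have hN0 : N 0 ω = 1 + (Finset.filter (fun m : Fin M => A 0 ω ≤ A m.succ ω) Finset.univ).card := by
      rw [hNsum, Fin.sum_univ_succ, if_pos le_rfl, Finset.card_filter]
    have hMpos : (0 : ℝ) < (M : ℝ) + 1 := by positivity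
    simp only [Set.mem_setOf_eq, hEdef, hN0]
    rw [div_le_iff₀ hMpos]
    constructor
    · intro h
      exact Nat.le_floor (by push_cast at h ⊢; linarith)
    · intro h
      have := (Nat.le_floor_iff (by positivity)).mp h
      push_cast at this ⊢
      linarith
  -- pointwise counting bound
  have key : ∀ ω, ((Finset.univ.filter (fun i : Fin (M + 1) => N i ω ≤ k)).card : ℕ) ≤ k := by
    intro ω
    set S := Finset.univ.filter (fun i : Fin (M + 1) => N i ω ≤ k) with hS
    rcases S.eq_empty_or_nonempty with h | h
    · simp [h]
    · obtain ⟨i₀, hi₀S, hmin⟩ := S.exists_min_image (fun i => A i ω) h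
      have hsub : S ⊆ Finset.univ.filter (fun m : Fin (M + 1) => A i₀ ω ≤ A m ω) := by
        intro j hj
        simp only [Finset.mem_filter, Finset.mem_univ, true_and]
        exact hmin j hj
      calc S.card ≤ (Finset.univ.filter (fun m : Fin (M + 1) => A i₀ ω ≤ A m ω)).card :=
            Finset.card_le_card hsub
        _ = N i₀ ω := rfl
        _ ≤ k := by
            have := hi₀S
            simp only [hS, Finset.mem_filter] at this
            exact this.2
  -- measure equality
  set F : Ω → (Fin (M + 1) → ℝ) := fun ω j => A j ω with hF
  have hFmeas : Measurable F := measurable_pi_lambda _ fun j => hA j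
  set B : Fin (M + 1) → Set (Fin (M + 1) → ℝ) :=
    fun i => {v | (Finset.univ.filter (fun m : Fin (M + 1) => v i ≤ v m)).card ≤ k} with hB
  have hBmeas : ∀ i, MeasurableSet (B i) := by
    intro i
    have hg : Measurable (fun v : Fin (M + 1) → ℝ =>
        ∑ m : Fin (M + 1), if v i ≤ v m then 1 else 0) :=
      Finset.measurable_sum _ fun m _ =>
        Measurable.ite (measurableSet_le (measurable_pi_apply i) (measurable_pi_apply m))
          measurable_const measurable_const
    have : B i = (fun v : Fin (M + 1) → ℝ =>
        ∑ m : Fin (M + 1), if v i ≤ v m then 1 else 0) ⁻¹' Set.Iic k := by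
      ext v
      simp only [hB, Set.mem_setOf_eq, Set.mem_preimage, Set.mem_Iic]
      rw [Finset.card_filter]
    rw [this]
    exact hg measurableSet_Iic
  have hEB : ∀ i, E i = F ⁻¹' B i := by
    intro i; ext ω; simp [hEdef, hB, hF, hNdef]
  have hPeq : ∀ i, P (E i) = P (E 0) := by
    intro i
    let σ : Equiv.Perm (Fin (M + 1)) := Equiv.swap 0 i
    have hg : Measurable (fun v : Fin (M + 1) → ℝ => v ∘ σ) :=
      measurable_pi_lambda _ fun j => measurable_pi_apply _
    have hBi : B i = (fun v : Fin (M + 1) → ℝ => v ∘ σ) ⁻¹' B 0 := by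
      ext v
      simp only [hB, Set.mem_preimage, Set.mem_setOf_eq, Function.comp_apply, σ,
        Equiv.swap_apply_left]
      simp only [Finset.card_filter]
      rw [Equiv.sum_comp (Equiv.swap 0 i) (fun m => if v i ≤ v m then 1 else 0)]
    have hcomp : (fun v : Fin (M + 1) → ℝ => v ∘ σ) ∘ F = fun ω => fun j => A (σ j) ω := rfl
    calc P (E i) = Measure.map F P (B i) := by
          rw [hEB i, Measure.map_apply hFmeas (hBmeas i)]
      _ = Measure.map F P ((fun v : Fin (M + 1) → ℝ => v ∘ σ) ⁻¹' B 0) := by rw [hBi]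
      _ = Measure.map (fun v : Fin (M + 1) → ℝ => v ∘ σ) (Measure.map F P) (B 0) := by
          rw [Measure.map_apply hg (hBmeas 0)]
      _ = Measure.map (fun ω => fun j => A (σ j) ω) P (B 0) := by
          rw [Measure.map_map hg hFmeas, hcomp]
      _ = Measure.map F P (B 0) := by rw [hexch σ]
      _ = P (E 0) := by rw [hEB 0, Measure.map_apply hFmeas (hBmeas 0)]
  -- sum bound
  have hsum : ∑ i : Fin (M + 1), P (E i) ≤ (k : ℝ≥0∞) := by
    have h1 : ∀ i, P (E i) = ∫⁻ ω, (E i).indicator (fun _ => (1 : ℝ≥0∞)) ω ∂P :=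
      fun i => (lintegral_indicator_one (hEmeas i)).symm
    calc ∑ i : Fin (M + 1), P (E i)
        = ∑ i : Fin (M + 1), ∫⁻ ω, (E i).indicator (fun _ => (1 : ℝ≥0∞)) ω ∂P := by
          simp_rw [h1]
      _ = ∫⁻ ω, ∑ i : Fin (M + 1), (E i).indicator (fun _ => (1 : ℝ≥0∞)) ω ∂P := by
          rw [lintegral_finset_sum]
          intro i _
          exact (measurable_const.indicator (hEmeas i))
      _ ≤ ∫⁻ _, (k : ℝ≥0∞) ∂P := by
          apply lintegral_mono
          intro ω
          have heq : ∑ i : Fin (M + 1), (E i).indicator (fun _ => (1 : ℝ≥0∞)) ω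
              = ((Finset.univ.filter (fun i : Fin (M + 1) => N i ω ≤ k)).card : ℝ≥0∞) := by
            rw [Finset.card_filter]
            push_cast
            apply Finset.sum_congr rfl
            intro i _
            simp [Set.indicator_apply, hEdef]
          exact heq.trans_le (by exact_mod_cast Nat.cast_le.mpr (key ω))
      _ = (k : ℝ≥0∞) := by simp
  have hsum' : ((M : ℝ≥0∞) + 1) * P (E 0) ≤ (k : ℝ≥0∞) := by
    have h2 : ∑ i : Fin (M + 1), P (E i) = ((M : ℝ≥0∞) + 1) * P (E 0) := by
      rw [Finset.sum_congr rfl fun i _ => hPeq i, Finset.sum_const, Finset.card_univ,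
        Fintype.card_fin, nsmul_eq_mul]
      push_cast
      ring
    rw [← h2]
    exact hsum
  -- conclude
  rw [hevent]
  have hfin : ((M : ℝ≥0∞) + 1) * P (E 0) ≠ ⊤ := by
    apply ENNReal.mul_ne_top
    · simp
    · exact (measure_ne_top P _)
  have htr : ((M : ℝ) + 1) * (P (E 0)).toReal ≤ (k : ℝ) := by
    have := ENNReal.toReal_mono (by simp) hsum'
    rw [ENNReal.toReal_mul, ENNReal.toReal_add (by simp) (by simp)] at this
    simpa using this
  have hMpos : (0 : ℝ) < (M : ℝ) + 1 := by positivity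
  have hkle : (k : ℝ) ≤ α * ((M : ℝ) + 1) := by
    have := Nat.floor_le (show (0:ℝ) ≤ α * (M + 1) by positivity)
    simpa [hk] using this
  nlinarith [(P (E 0)).toReal, htr, hkle]
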